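/- Let (𝒟₁, π₁) and (𝒟₂, π₂) be closed representations of a unital *-algebra A on complex Hilbert spaces H₁ and H₂, and let I : H₁ → H₂ be a linear isometry. Then I is an intertwiner from (𝒟₁, π₁) to (𝒟₂, π₂) if and only if I ∘ cl(π₁(a)) ⊆ cl(π₂(a)) ∘ I for every a ∈ A with a = a*, i.e. I maps dom(cl(π₁(a))) into dom(cl(π₂(a))) and I(cl(π₁(a))ξ) = cl(π₂(a))(Iξ) for all ξ ∈ dom(cl(π₁(a))). Moreover, if I is an intertwiner, then the inclusion I ∘ cl(π₁(a)) ⊆ cl(π₂(a)) ∘ I holds for every a ∈ A. -/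

import Mathlib

/-- A representation of a unital `⋆`-algebra `A` on a complex Hilbert space `H`:
a dense subspace `dom ⊆ H` together with a unital algebra homomorphism `π` from `A` into the
endomorphisms of `dom` satisfying `⟪π a ξ, η⟫ = ⟪ξ, π (star a) η⟫`. -/
structure HilbertRep (A : Type*) [Ring A] [Algebra ℂ A] [StarRing A] [StarModule ℂ A]
    (H : Type*) [NormedAddCommGroup H] [InnerProductSpace ℂ H] where
  dom : Submodule ℂ H
  dense : Dense (dom : Set H)
  π : A → (dom →ₗ[ℂ] dom)
  π_one : π 1 = LinearMap.id
  π_mul : ∀ a b : A, π (a * b) = (π a).comp (π b)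
  π_add : ∀ a b : A, π (a + b) = π a + π b
  π_smul : ∀ (c : ℂ) (a : A), π (c • a) = c • π a
  π_star : ∀ (a : A) (ξ η : dom),
    (inner ℂ ((π a ξ : dom) : H) (η : H) : ℂ) = inner ℂ (ξ : H) ((π (star a) η : dom) : H)

variable {A : Type*} [Ring A] [Algebra ℂ A] [StarRing A] [StarModule ℂ A]
variable {H₁ H₂ : Type*} [NormedAddCommGroup H₁] [InnerProductSpace ℂ H₁] [CompleteSpace H₁]
  [NormedAddCommGroup H₂] [InnerProductSpace ℂ H₂] [CompleteSpace H₂]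

/-- The operator `π a` of a representation, as a partially defined (unbounded) linear
operator on `H`. -/
def HilbertRep.op {A H : Type*} [Ring A] [Algebra ℂ A] [StarRing A] [StarModule ℂ A]
    [NormedAddCommGroup H] [InnerProductSpace ℂ H] (ρ : HilbertRep A H) (a : A) :
    H →ₗ.[ℂ] H :=
  ⟨ρ.dom, ρ.dom.subtype.comp (ρ.π a)⟩

/-- A representation is *closed* if its domain is the intersection of the domains of the
closures of all the operators `π a`. -/
def HilbertRep.IsClosedRep {A H : Type*} [Ring A] [Algebra ℂ A] [StarRing A] [StarModule ℂ A]
    [NormedAddCommGroup H] [InnerProductSpace ℂ H] (ρ : HilbertRep A H) : Prop :=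
  (ρ.dom : Set H) = ⋂ a : A, ((ρ.op a).closure.domain : Set H)

/-- `I` is an (isometric) intertwiner from `(𝒟₁, π₁)` to `(𝒟₂, π₂)`:
`I (𝒟₁) ⊆ 𝒟₂` and `I ∘ π₁ a = π₂ a ∘ I` on `𝒟₁` for every `a`. -/
def Intertwines (I : H₁ →ₗᵢ[ℂ] H₂) (ρ₁ : HilbertRep A H₁) (ρ₂ : HilbertRep A H₂) : Prop :=
  ∀ ξ : ρ₁.dom, ∃ η : ρ₂.dom, (η : H₂) = I (ξ : H₁) ∧
    ∀ a : A, ((ρ₂.π a η : ρ₂.dom) : H₂) = I ((ρ₁.π a ξ : ρ₁.dom) : H₁)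

/-- `I ∘ cl (π₁ a) ⊆ cl (π₂ a) ∘ I`:  `I` maps the domain of `cl (π₁ a)` into the domain of
`cl (π₂ a)` and intertwines the closures there. -/
def ClosureIntertwines (I : H₁ →ₗᵢ[ℂ] H₂) (ρ₁ : HilbertRep A H₁) (ρ₂ : HilbertRep A H₂)
    (a : A) : Prop :=
  ∀ ξ : (ρ₁.op a).closure.domain, ∃ η : (ρ₂.op a).closure.domain,
    (η : H₂) = I (ξ : H₁) ∧ (ρ₂.op a).closure η = I ((ρ₁.op a).closure ξ)


section Aux

variable {A : Type*} [Ring A] [Algebra ℂ A] [StarRing A] [StarModule ℂ A]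
variable {H : Type*} [NormedAddCommGroup H] [InnerProductSpace ℂ H]

local notation "⟪" x ", " y "⟫" => @inner ℂ _ _ x y

lemma op_apply (ρ : HilbertRep A H) (a : A) (ξ : ρ.dom) : ρ.op a ξ = ((ρ.π a ξ : ρ.dom) : H) := rfl

lemma star_inner (ρ : HilbertRep A H) (a : A) (ξ η : ρ.dom) :
    ⟪(η : H), ((ρ.π a ξ : ρ.dom) : H)⟫ = ⟪((ρ.π (star a) η : ρ.dom) : H), (ξ : H)⟫ := by
  rw [← inner_conj_symm, ρ.π_star a ξ η, inner_conj_symm]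

lemma op_isClosable (ρ : HilbertRep A H) (a : A) : (ρ.op a).IsClosable := by
  have key : ∀ x ∈ (ρ.op a).graph.topologicalClosure, x.1 = 0 → x.2 = 0 := by
    intro x hx hx1
    have h0 : ∀ η : ρ.dom, ⟪(η : H), x.2⟫ = 0 := by
      intro η
      set T : (H × H) →L[ℂ] ℂ :=
        (innerSL ℂ (η : H)).comp (ContinuousLinearMap.snd ℂ H H) -
          (innerSL ℂ ((ρ.π (star a) η : ρ.dom) : H)).comp (ContinuousLinearMap.fst ℂ H H) with hT
      have hker : (ρ.op a).graph ≤ LinearMap.ker (T : (H × H) →ₗ[ℂ] ℂ) := by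
        intro p hp
        rcases (ρ.op a).mem_graph_iff.1 hp with ⟨ξ, hξ1, hξ2⟩
        simp only [LinearMap.mem_ker, ContinuousLinearMap.coe_coe, hT,
          ContinuousLinearMap.sub_apply, ContinuousLinearMap.comp_apply,
          ContinuousLinearMap.coe_snd', ContinuousLinearMap.coe_fst', innerSL_apply_apply]
        rw [← hξ1, ← hξ2]
        exact sub_eq_zero.2 (star_inner ρ a ξ η)
      have hcl : (ρ.op a).graph.topologicalClosure ≤ LinearMap.ker (T : (H × H) →ₗ[ℂ] ℂ) :=
        Submodule.topologicalClosure_minimal _ hker (ContinuousLinearMap.isClosed_ker T)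
      have := hcl hx
      simp only [LinearMap.mem_ker, ContinuousLinearMap.coe_coe, hT,
        ContinuousLinearMap.sub_apply, ContinuousLinearMap.comp_apply,
        ContinuousLinearMap.coe_snd', ContinuousLinearMap.coe_fst', innerSL_apply_apply, hx1,
        inner_zero_right, sub_zero] at this
      exact this
    have : x.2 = 0 := by
      refine ρ.dense.eq_zero_of_inner_left (𝕜 := ℂ) (fun v hv => ?_)
      rw [← inner_conj_symm, h0 ⟨v, hv⟩, map_zero]
    exact this
  exact ⟨((ρ.op a).graph.topologicalClosure).toLinearPMap,
    (Submodule.toLinearPMap_graph_eq _ key).symm⟩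

lemma key_ineq (ρ : HilbertRep A H) (a : A) (ζ : ρ.dom) :
    ‖((ρ.π a ζ : ρ.dom) : H)‖ ^ 2 ≤ ‖((ρ.π (1 + star a * a) ζ : ρ.dom) : H)‖ * ‖(ζ : H)‖ := by
  set b := 1 + star a * a with hb
  have h1 : ⟪((ρ.π b ζ : ρ.dom) : H), (ζ : H)⟫ =
      ((‖(ζ : H)‖ ^ 2 + ‖((ρ.π a ζ : ρ.dom) : H)‖ ^ 2 : ℝ) : ℂ) := by
    have hπ : ρ.π b ζ = ζ + ρ.π (star a) (ρ.π a ζ) := by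
      rw [hb, ρ.π_add, ρ.π_mul]
      simp [ρ.π_one]
    rw [hπ]
    push_cast [Submodule.coe_add]
    rw [inner_add_left]
    have h2 : ⟪((ρ.π (star a) (ρ.π a ζ) : ρ.dom) : H), (ζ : H)⟫ =
        ⟪((ρ.π a ζ : ρ.dom) : H), ((ρ.π a ζ : ρ.dom) : H)⟫ := by
      rw [ρ.π_star (star a) (ρ.π a ζ) ζ, star_star]
    rw [h2, inner_self_eq_norm_sq_to_K, inner_self_eq_norm_sq_to_K]
    norm_cast
  have h3 : (‖(ζ : H)‖ ^ 2 + ‖((ρ.π a ζ : ρ.dom) : H)‖ ^ 2 : ℝ) ≤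
      ‖((ρ.π b ζ : ρ.dom) : H)‖ * ‖(ζ : H)‖ := by
    have := norm_inner_le_norm (𝕜 := ℂ) ((ρ.π b ζ : ρ.dom) : H) (ζ : H)
    rw [h1] at this
    calc (‖(ζ : H)‖ ^ 2 + ‖((ρ.π a ζ : ρ.dom) : H)‖ ^ 2 : ℝ)
        = ‖((‖(ζ : H)‖ ^ 2 + ‖((ρ.π a ζ : ρ.dom) : H)‖ ^ 2 : ℝ) : ℂ)‖ := by
          rw [Complex.norm_real, Real.norm_eq_abs, abs_of_nonneg (by positivity)]
      _ ≤ _ := this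
  nlinarith [sq_nonneg ‖(ζ : H)‖]

end Aux

set_option linter.unusedSectionVars false in
lemma closure_graph_maps (I : H₁ →ₗᵢ[ℂ] H₂) (ρ₁ : HilbertRep A H₁) (ρ₂ : HilbertRep A H₂)
    (hI : ∀ ξ : ρ₁.dom, ∃ η : ρ₂.dom, (η : H₂) = I (ξ : H₁) ∧
      ∀ a : A, ((ρ₂.π a η : ρ₂.dom) : H₂) = I ((ρ₁.π a ξ : ρ₁.dom) : H₁))
    (a : A) {x y : H₁} (h : (x, y) ∈ (ρ₁.op a).closure.graph) :
    (I x, I y) ∈ (ρ₂.op a).closure.graph := by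
  rw [← (op_isClosable ρ₁ a).graph_closure_eq_closure_graph] at h
  rw [← (op_isClosable ρ₂ a).graph_closure_eq_closure_graph]
  have hJcont : Continuous (fun p : H₁ × H₁ => ((I p.1, I p.2) : H₂ × H₂)) :=
    (I.continuous.comp continuous_fst).prodMk (I.continuous.comp continuous_snd)
  have himg : (fun p : H₁ × H₁ => ((I p.1, I p.2) : H₂ × H₂)) '' ((ρ₁.op a).graph : Set (H₁ × H₁))
      ⊆ ((ρ₂.op a).graph : Set (H₂ × H₂)) := by
    rintro _ ⟨p, hp, rfl⟩
    rcases (ρ₁.op a).mem_graph_iff.1 hp with ⟨ξ, hξ1, hξ2⟩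
    rcases hI ξ with ⟨η, hη1, hη2⟩
    refine (ρ₂.op a).mem_graph_iff.2 ⟨η, ?_, ?_⟩
    · show (η : H₂) = I p.1
      rw [hη1, hξ1]
    · show ((ρ₂.π a η : ρ₂.dom) : H₂) = I p.2
      rw [hη2 a, ← hξ2]; rfl
  have hx : (x, y) ∈ closure ((ρ₁.op a).graph : Set (H₁ × H₁)) := h
  have : ((I x, I y) : H₂ × H₂) ∈ closure ((ρ₂.op a).graph : Set (H₂ × H₂)) := by
    have h1 := Set.mem_image_of_mem (fun p : H₁ × H₁ => ((I p.1, I p.2) : H₂ × H₂)) hx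
    have h2 := image_closure_subset_closure_image (s := ((ρ₁.op a).graph : Set (H₁ × H₁))) hJcont
    exact closure_mono himg (h2 h1)
  exact this

lemma closure_domain_le {H : Type*} [NormedAddCommGroup H] [InnerProductSpace ℂ H]
    [CompleteSpace H] (ρ : HilbertRep A H) (a : A) {w : H}
    (hw : w ∈ (ρ.op (1 + star a * a)).closure.domain) : w ∈ (ρ.op a).closure.domain := by
  set b := 1 + star a * a with hb
  -- (w, cl(op b) w) is in the closure of the graph of op b
  have hgr : (w, (ρ.op b).closure ⟨w, hw⟩) ∈ closure ((ρ.op b).graph : Set (H × H)) := by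
    rw [← Submodule.topologicalClosure_coe, SetLike.mem_coe,
      (op_isClosable ρ b).graph_closure_eq_closure_graph]
    exact (ρ.op b).closure.mem_graph ⟨w, hw⟩
  rcases mem_closure_iff_seq_limit.1 hgr with ⟨p, hp, hlim⟩
  choose ζ hζ1 hζ2 using fun n => (ρ.op b).mem_graph_iff.1 (hp n)
  have hζlim : Filter.Tendsto (fun n => ((ζ n : ρ.dom) : H)) Filter.atTop (nhds w) := by
    have h2 := (continuous_fst.tendsto _).comp hlim
    have he : (fun n => (p n).1) = fun n => ((ζ n : ρ.dom) : H) := by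
      funext n; rw [← hζ1 n]
    rwa [← he]
  have hbζlim : Filter.Tendsto (fun n => ((ρ.π b (ζ n) : ρ.dom) : H)) Filter.atTop
      (nhds ((ρ.op b).closure ⟨w, hw⟩)) := by
    have h2 := (continuous_snd.tendsto _).comp hlim
    have : (fun n => (p n).2) = fun n => ((ρ.π b (ζ n) : ρ.dom) : H) := by
      funext n; rw [← hζ2 n]; rfl
    rwa [← this]
  have hcζ : CauchySeq (fun n => ((ζ n : ρ.dom) : H)) := hζlim.cauchySeq
  have hcbζ : CauchySeq (fun n => ((ρ.π b (ζ n) : ρ.dom) : H)) := hbζlim.cauchySeq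
  -- the sequence π a ζ n is Cauchy
  have hcaζ : CauchySeq (fun n => ((ρ.π a (ζ n) : ρ.dom) : H)) := by
    rw [Metric.cauchySeq_iff]
    intro ε hε
    rcases Metric.cauchySeq_iff.1 hcζ ε hε with ⟨N₁, hN₁⟩
    rcases Metric.cauchySeq_iff.1 hcbζ ε hε with ⟨N₂, hN₂⟩
    refine ⟨max N₁ N₂, fun m hm n hn => ?_⟩
    have h1 := hN₁ m (le_of_max_le_left hm) n (le_of_max_le_left hn)
    have h2 := hN₂ m (le_of_max_le_right hm) n (le_of_max_le_right hn)
    have key := key_ineq ρ a (ζ m - ζ n)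
    rw [← hb] at key
    have e1 : ((ρ.π a (ζ m - ζ n) : ρ.dom) : H) =
        ((ρ.π a (ζ m) : ρ.dom) : H) - ((ρ.π a (ζ n) : ρ.dom) : H) := by
      exact congrArg Subtype.val (map_sub (ρ.π a) (ζ m) (ζ n))
    have e2 : ((ρ.π b (ζ m - ζ n) : ρ.dom) : H) =
        ((ρ.π b (ζ m) : ρ.dom) : H) - ((ρ.π b (ζ n) : ρ.dom) : H) := by
      exact congrArg Subtype.val (map_sub (ρ.π b) (ζ m) (ζ n))
    have e3 : ((ζ m - ζ n : ρ.dom) : H) = ((ζ m : ρ.dom) : H) - ((ζ n : ρ.dom) : H) := rfl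
    rw [e1, e2, e3] at key
    rw [dist_eq_norm] at h1 h2 ⊢
    set u := ‖((ρ.π a (ζ m) : ρ.dom) : H) - ((ρ.π a (ζ n) : ρ.dom) : H)‖
    have hu : 0 ≤ u := norm_nonneg _
    have hv : 0 ≤ ‖((ρ.π b (ζ m) : ρ.dom) : H) - ((ρ.π b (ζ n) : ρ.dom) : H)‖ := norm_nonneg _
    have hw' : 0 ≤ ‖((ζ m : ρ.dom) : H) - ((ζ n : ρ.dom) : H)‖ := norm_nonneg _
    nlinarith
  rcases cauchySeq_tendsto_of_complete hcaζ with ⟨y, hy⟩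
  -- (w, y) is in the closure of the graph of op a
  have : (w, y) ∈ closure ((ρ.op a).graph : Set (H × H)) := by
    apply mem_closure_of_tendsto (f := fun n => (((ζ n : ρ.dom) : H), ((ρ.π a (ζ n) : ρ.dom) : H)))
      (hζlim.prodMk_nhds hy)
    exact Filter.Eventually.of_forall fun n => (ρ.op a).mem_graph (ζ n)
  rw [← Submodule.topologicalClosure_coe, SetLike.mem_coe,
    (op_isClosable ρ a).graph_closure_eq_closure_graph] at this
  rcases (ρ.op a).closure.mem_graph_iff.1 this with ⟨ξ', hξ'1, -⟩
  have : (ξ' : H) = w := hξ'1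
  exact this ▸ ξ'.2

/-- A linear isometry intertwines two closed representations if and only if it intertwines the
closures `cl (π a)` for all symmetric elements `a = a*`; moreover an intertwiner automatically
intertwines the closures `cl (π a)` for *all* `a`. -/
theorem intertwiner_iff_closures_on_symmetric
    (ρ₁ : HilbertRep A H₁) (ρ₂ : HilbertRep A H₂)
    (h₁ : ρ₁.IsClosedRep) (h₂ : ρ₂.IsClosedRep) (I : H₁ →ₗᵢ[ℂ] H₂) :
    (Intertwines I ρ₁ ρ₂ ↔ ∀ a : A, star a = a → ClosureIntertwines I ρ₁ ρ₂ a) ∧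
    (Intertwines I ρ₁ ρ₂ → ∀ a : A, ClosureIntertwines I ρ₁ ρ₂ a) := by
  have fwd : Intertwines I ρ₁ ρ₂ → ∀ a : A, ClosureIntertwines I ρ₁ ρ₂ a := by
    intro hI a ξ
    have h := closure_graph_maps I ρ₁ ρ₂ hI a ((ρ₁.op a).closure.mem_graph ξ)
    rcases (ρ₂.op a).closure.mem_graph_iff.1 h with ⟨η, hη1, hη2⟩
    exact ⟨η, hη1, hη2⟩
  have bwd : (∀ a : A, star a = a → ClosureIntertwines I ρ₁ ρ₂ a) → Intertwines I ρ₁ ρ₂ := by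
    intro hsym ξ
    -- membership of I ξ in all closure domains
    have hdom : ∀ a : A, I (ξ : H₁) ∈ (ρ₂.op a).closure.domain := by
      intro a
      set b := 1 + star a * a with hb
      have hbsym : star b = b := by
        rw [hb, star_add, star_one, star_mul, star_star]
      have hξ1 : (ξ : H₁) ∈ (ρ₁.op b).closure.domain := (ρ₁.op b).le_closure.1 ξ.2
      rcases hsym b hbsym ⟨(ξ : H₁), hξ1⟩ with ⟨η, hη1, -⟩
      have : I (ξ : H₁) ∈ (ρ₂.op b).closure.domain := hη1 ▸ η.2
      exact closure_domain_le ρ₂ a this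
    have hmem : I (ξ : H₁) ∈ ρ₂.dom := by
      have := h₂
      rw [HilbertRep.IsClosedRep] at this
      rw [← SetLike.mem_coe, this, Set.mem_iInter]
      exact fun a => hdom a
    refine ⟨⟨I (ξ : H₁), hmem⟩, rfl, ?_⟩
    -- the intertwining identity for symmetric elements
    have hsymval : ∀ c : A, star c = c →
        ((ρ₂.π c ⟨I (ξ : H₁), hmem⟩ : ρ₂.dom) : H₂) = I ((ρ₁.π c ξ : ρ₁.dom) : H₁) := by
      intro c hc
      have hξ1 : (ξ : H₁) ∈ (ρ₁.op c).closure.domain := (ρ₁.op c).le_closure.1 ξ.2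
      rcases hsym c hc ⟨(ξ : H₁), hξ1⟩ with ⟨η, hη1, hη2⟩
      -- the closure of op₁ c agrees with π₁ c on ξ
      have e1 : (ρ₁.op c).closure ⟨(ξ : H₁), hξ1⟩ = ((ρ₁.π c ξ : ρ₁.dom) : H₁) :=
        ((ρ₁.op c).le_closure.2 (x := ξ) (y := ⟨(ξ : H₁), hξ1⟩) rfl).symm
      -- the closure of op₂ c agrees with π₂ c on ⟨I ξ, hmem⟩
      have hmem' : I (ξ : H₁) ∈ (ρ₂.op c).closure.domain := (ρ₂.op c).le_closure.1 hmem
      have e2 : (ρ₂.op c).closure ⟨I (ξ : H₁), hmem'⟩ =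
          ((ρ₂.π c ⟨I (ξ : H₁), hmem⟩ : ρ₂.dom) : H₂) :=
        ((ρ₂.op c).le_closure.2 (x := ⟨I (ξ : H₁), hmem⟩) (y := ⟨I (ξ : H₁), hmem'⟩) rfl).symm
      have eη : η = ⟨I (ξ : H₁), hmem'⟩ := Subtype.ext hη1
      rw [← e2, ← eη, hη2, e1]
    intro a
    set b : A := ((1 : ℂ)/2) • (a + star a) with hbdef
    set c : A := ((-Complex.I)/2) • (a - star a) with hcdef
    have hbs : star b = b := by
      rw [hbdef, star_smul, star_add, star_star]
      have : star ((1 : ℂ)/2) = (1 : ℂ)/2 := by simp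
      rw [this, add_comm]
    have hcs : star c = c := by
      rw [hcdef, star_smul, star_sub, star_star]
      have : star ((-Complex.I)/2) = Complex.I/2 := by
        simp [Complex.star_def]
      rw [this]
      module
    have hba : b + Complex.I • c = a := by
      rw [hbdef, hcdef]
      match_scalars <;> simp [Complex.ext_iff] <;> ring
    have hd2 : ((ρ₂.π a ⟨I (ξ : H₁), hmem⟩ : ρ₂.dom) : H₂) =
        ((ρ₂.π b ⟨I (ξ : H₁), hmem⟩ : ρ₂.dom) : H₂) +
          Complex.I • ((ρ₂.π c ⟨I (ξ : H₁), hmem⟩ : ρ₂.dom) : H₂) := by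
      rw [← hba, ρ₂.π_add]
      simp [ρ₂.π_smul]
    have hd1 : ((ρ₁.π a ξ : ρ₁.dom) : H₁) =
        ((ρ₁.π b ξ : ρ₁.dom) : H₁) + Complex.I • ((ρ₁.π c ξ : ρ₁.dom) : H₁) := by
      rw [← hba, ρ₁.π_add]
      simp [ρ₁.π_smul]
    rw [hd2, hd1, hsymval b hbs, hsymval c hcs, map_add, map_smul]
  exact ⟨⟨fun h a _ => fwd h a, bwd⟩, fwd⟩
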